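/- Suppose A is everywhere Fréchet differentiable with derivative map Lipschitz of constant L ≥ 0. Fix x, g ∈ E and α ≥ 0, and set s = x − x₀, r = A(x) − b, J = DA(x), and F̃(α) = (1/(2γ))‖s − α g‖² + (ρ/2)‖r − α J(g)‖². Then F(x − α g) ≤ F̃(α) + ρ·‖r − α J(g)‖·(L/2)·α²·‖g‖² + (ρ/2)·((L/2)·α²·‖g‖²)². -/

import Mathlib

open Set

lemma taylor_aux {E M : Type*} [NormedAddCommGroup E] [NormedSpace ℝ E]
    [NormedAddCommGroup M] [NormedSpace ℝ M]
    (A : E → M) (hA : Differentiable ℝ A) (L : ℝ)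
    (hLip : ∀ x y : E, ‖fderiv ℝ A x - fderiv ℝ A y‖ ≤ L * ‖x - y‖)
    (x v : E) : ‖A (x + v) - A x - fderiv ℝ A x v‖ ≤ L * ‖v‖ ^ 2 / 2 := by
  set f : ℝ → M := fun t => A (x + t • v) - A x - t • (fderiv ℝ A x v) with hfdef
  have hderiv : ∀ t : ℝ, HasDerivAt f (fderiv ℝ A (x + t • v) v - fderiv ℝ A x v) t := by
    intro t
    have h1 : HasDerivAt (fun t : ℝ => x + t • v) v t := by
      simpa using ((hasDerivAt_id t).smul_const v).const_add x
    have h2 : HasDerivAt (fun t => A (x + t • v)) (fderiv ℝ A (x + t • v) v) t :=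
      (hA (x + t • v)).hasFDerivAt.comp_hasDerivAt t h1
    have h3 : HasDerivAt (fun t : ℝ => t • (fderiv ℝ A x v)) (fderiv ℝ A x v) t := by
      simpa using (hasDerivAt_id t).smul_const (fderiv ℝ A x v)
    exact (h2.sub_const (A x)).sub h3
  have hB : ∀ t : ℝ, HasDerivAt (fun t : ℝ => L * ‖v‖ ^ 2 / 2 * t ^ 2) (L * ‖v‖ ^ 2 * t) t := by
    intro t
    have := (hasDerivAt_pow 2 t).const_mul (L * ‖v‖ ^ 2 / 2)
    refine this.congr_deriv ?_
    rw [show (2:ℕ) - 1 = 1 from rfl]; push_cast; ring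
  have key := image_norm_le_of_norm_deriv_right_le_deriv_boundary
    (f := f) (a := 0) (b := 1)
    (f' := fun t => fderiv ℝ A (x + t • v) v - fderiv ℝ A x v)
    (fun t _ => (hderiv t).continuousAt.continuousWithinAt)
    (fun t ht => (hderiv t).hasDerivWithinAt)
    (B := fun t => L * ‖v‖ ^ 2 / 2 * t ^ 2) (B' := fun t => L * ‖v‖ ^ 2 * t)
    (by simp [f]) hB
    (fun t ht => by
      have h1 : ‖fderiv ℝ A (x + t • v) v - fderiv ℝ A x v‖
          ≤ ‖fderiv ℝ A (x + t • v) - fderiv ℝ A x‖ * ‖v‖ := by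
        have := (fderiv ℝ A (x + t • v) - fderiv ℝ A x).le_opNorm v
        simpa using this
      have h2 : ‖fderiv ℝ A (x + t • v) - fderiv ℝ A x‖ ≤ L * (t * ‖v‖) := by
        have := hLip (x + t • v) x
        simpa [norm_smul, abs_of_nonneg ht.1] using this
      calc ‖fderiv ℝ A (x + t • v) v - fderiv ℝ A x v‖
          ≤ L * (t * ‖v‖) * ‖v‖ := h1.trans (by
            exact mul_le_mul_of_nonneg_right h2 (norm_nonneg v))
        _ = L * ‖v‖ ^ 2 * t := by ring)
    (right_mem_Icc.2 zero_le_one)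
  simpa [f] using key





/-- Upper bound on `F(x − α g)` by the quadratic model plus remainder terms, when the
derivative map of `A` is Lipschitz with constant `L` and `α ≥ 0`. -/
theorem stmt_6 {E M : Type*}
    [NormedAddCommGroup E] [InnerProductSpace ℝ E] [FiniteDimensional ℝ E]
    [NormedAddCommGroup M] [InnerProductSpace ℝ M] [FiniteDimensional ℝ M]
    (A : E → M) (x₀ : E) (b : M) (γ ρ : ℝ) (hγ : 0 < γ) (hρ : 0 < ρ)
    (F : E → ℝ)
    (hF : ∀ x : E, F x = (1 / (2 * γ)) * ‖x - x₀‖ ^ 2 + (ρ / 2) * ‖A x - b‖ ^ 2)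
    (hA : Differentiable ℝ A)
    (L : ℝ) (hL : 0 ≤ L)
    (hLip : ∀ x y : E, ‖fderiv ℝ A x - fderiv ℝ A y‖ ≤ L * ‖x - y‖)
    (x g : E) (α : ℝ) (hα : 0 ≤ α)
    (s : E) (hs : s = x - x₀)
    (r : M) (hr : r = A x - b)
    (Ft : ℝ → ℝ)
    (hFt : ∀ β : ℝ, Ft β = (1 / (2 * γ)) * ‖s - β • g‖ ^ 2 +
      (ρ / 2) * ‖r - β • (fderiv ℝ A x g)‖ ^ 2) :
    F (x - α • g) ≤ Ft α + ρ * ‖r - α • (fderiv ℝ A x g)‖ * ((L / 2) * α ^ 2 * ‖g‖ ^ 2) +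
      (ρ / 2) * ((L / 2) * α ^ 2 * ‖g‖ ^ 2) ^ 2 := by
  set J := fderiv ℝ A x with hJ
  set δ := L / 2 * α ^ 2 * ‖g‖ ^ 2 with hδ
  have hδ' : 0 ≤ δ := by positivity
  have htay := taylor_aux A hA L hLip x (-(α • g))
  have hxv : x + -(α • g) = x - α • g := by abel
  have hJv : J (-(α • g)) = -(α • (J g)) := by simp
  have htay' : ‖A (x - α • g) - A x + α • (J g)‖ ≤ δ := by
    rw [hxv, hJv] at htay
    have hnv : ‖-(α • g)‖ ^ 2 = α ^ 2 * ‖g‖ ^ 2 := by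
      rw [norm_neg, norm_smul, mul_pow, Real.norm_eq_abs, sq_abs]
    calc ‖A (x - α • g) - A x + α • (J g)‖
        = ‖A (x - α • g) - A x - -(α • (J g))‖ := by rw [sub_neg_eq_add]
      _ ≤ L * ‖-(α • g)‖ ^ 2 / 2 := htay
      _ = δ := by rw [hnv, hδ]; ring
  set q := r - α • (J g) with hq
  have hdecomp : A (x - α • g) - b = q + (A (x - α • g) - A x + α • (J g)) := by
    rw [hq, hr]; abel
  have hnorm : ‖A (x - α • g) - b‖ ≤ ‖q‖ + δ := by
    rw [hdecomp]
    exact (norm_add_le _ _).trans (by linarith)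
  have hsq : ‖A (x - α • g) - b‖ ^ 2 ≤ (‖q‖ + δ) ^ 2 :=
    pow_le_pow_left₀ (norm_nonneg _) hnorm 2
  have hsub : x - α • g - x₀ = s - α • g := by rw [hs]; abel
  rw [hF, hFt, hsub]
  have hqnn : (0:ℝ) ≤ ‖q‖ := norm_nonneg q
  nlinarith [hsq, hρ.le]
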